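/- arXiv:1003.4017 — 3 statements merged into one kernel-verified Lean document; each statement's English description precedes it below -/
import Mathlib

section
/- Strong Abelian Property: Let ρ be a rotor configuration and σ a chip configuration on a finite directed multigraph G with a nonempty sink set S, and let V' = V∖S. Given two functions u₁, u₂ : V' → ℕ, write F^{u_i}(ρ,σ) = (ρ_i, σ_i) for i = 1,2. If σ₁ = σ₂ on V', and both ρ₁ and ρ₂ are acyclic, then u₁ = u₂. -/
/-- A finite directed multigraph `G = (V, E)` (loops and multiple edges allowed),
with source and target maps `src, tgt : E → V`, a nonempty set `S` of sinks
(`V' = V \ S`), and, for each vertex, a fixed cyclic ordering of the multiset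
`E_v = {e : src e = v}` of outgoing edges, recorded by the successor map
`nxt : E → E`, `e = e_v^i ↦ e⁺ = e_v^{i+1 mod d_v}`: it preserves sources and
acts transitively (hence cyclically) on each `E_v`. -/
structure RotorSystem where
  V : Type
  E : Type
  [fintV : Fintype V]
  [decV : DecidableEq V]
  [decE : DecidableEq E]
  [fintE : Fintype E]
  src : E → V
  tgt : E → V
  nxt : E → E
  nxt_src : ∀ e, src (nxt e) = src e
  nxt_cyclic : ∀ e e', src e = src e' → ∃ k : ℕ, nxt^[k] e = e'
  S : Set V
  [decS : DecidablePred (· ∈ S)]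
  S_nonempty : S.Nonempty

attribute [instance] RotorSystem.fintV RotorSystem.decV RotorSystem.decE
  RotorSystem.fintE RotorSystem.decS

namespace RotorSystem

variable (G : RotorSystem)

/-- `ρ : V → E` is a rotor configuration if `ρ(v) ∈ E_v` for every non-sink
vertex `v ∈ V' = V \ S` (the values at sinks are irrelevant). -/
def IsRotorConfig (ρ : G.V → G.E) : Prop := ∀ v, v ∉ G.S → G.src (ρ v) = v

/-- Firing a vertex `v ∈ V'`: the rotor at `v` is advanced from `ρ(v)` to
`ρ(v)⁺`, one chip is removed at `v`, and one chip is added at the target of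
`ρ(v)⁺`.  (Chip counts may go negative.) -/
def fire (v : G.V) (s : (G.V → G.E) × (G.V → ℤ)) : (G.V → G.E) × (G.V → ℤ) :=
  (Function.update s.1 v (G.nxt (s.1 v)),
   fun w => s.2 w - (if w = v then 1 else 0)
              + (if w = G.tgt (G.nxt (s.1 v)) then 1 else 0))

/-- Firing the vertices of a list in order.  `F^u (ρ,σ)` is `fireList L (ρ,σ)`
for any list `L` in which each `v ∈ V'` occurs exactly `u(v)` times (by
commutativity of the firing operators the result does not depend on `L`). -/
def fireList (L : List G.V) (s : (G.V → G.E) × (G.V → ℤ)) :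
    (G.V → G.E) × (G.V → ℤ) :=
  L.foldl (fun s v => G.fire v s) s

/-- A rotor configuration `ρ` is acyclic if the spanning subgraph
`(V, ρ(V'))` has no directed cycles: there is no `k ≥ 1` and vertices
`f 0, f 1, …, f k` with `f k = f 0`, each `f i ∈ V'` for `i < k`, and each
`f (i+1)` the head of the rotor edge `ρ(f i)`. -/
def Acyclic (ρ : G.V → G.E) : Prop :=
  ∀ (k : ℕ) (f : ℕ → G.V), 0 < k → (∀ i < k, f i ∉ G.S) →
    (∀ i < k, f (i + 1) = G.tgt (ρ (f i))) → f k ≠ f 0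

end RotorSystem

namespace RotorSystem

open Finset

variable {G : RotorSystem}

/-- Number of chips sent to `w` when vertex `v` is fired `u` times starting
from rotor configuration `ρ`. -/
def chips (G : RotorSystem) (ρ : G.V → G.E) (v : G.V) (u : ℕ) (w : G.V) : ℕ :=
  ((Finset.range u).filter (fun j => G.tgt (G.nxt^[j+1] (ρ v)) = w)).card

/-- Closed form of the state after firing each vertex `v` exactly `c v` times. -/
def state (G : RotorSystem) (ρ : G.V → G.E) (σ : G.V → ℤ) (c : G.V → ℕ) :
    (G.V → G.E) × (G.V → ℤ) :=
  (fun v => G.nxt^[c v] (ρ v),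
   fun w => σ w - c w + ∑ v, (G.chips ρ v (c v) w : ℤ))

lemma chips_succ (ρ : G.V → G.E) (v : G.V) (u : ℕ) (w : G.V) :
    G.chips ρ v (u + 1) w
      = G.chips ρ v u w + (if G.tgt (G.nxt^[u+1] (ρ v)) = w then 1 else 0) := by
  unfold chips
  rw [Finset.range_add_one, Finset.filter_insert]
  split_ifs with h
  · rw [Finset.card_insert_of_notMem (by simp only [Finset.mem_filter, Finset.mem_range, lt_irrefl, false_and, not_false_eq_true])]
  · simp

lemma fire_state (ρ : G.V → G.E) (σ : G.V → ℤ) (c : G.V → ℕ) (x : G.V) :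
    G.fire x (G.state ρ σ c) = G.state ρ σ (Function.update c x (c x + 1)) := by
  refine Prod.ext ?_ ?_
  · funext v
    by_cases h : v = x
    · subst h
      simp [fire, state, Function.iterate_succ_apply']
    · simp [fire, state, Function.update_of_ne h]
  · funext w
    show (G.state ρ σ c).2 w - _ + _ = _
    have hsum : (∑ v, (G.chips ρ v (Function.update c x (c x + 1) v) w : ℤ))
        = ∑ v, (G.chips ρ v (c v) w : ℤ)
          + (if G.tgt (G.nxt^[c x + 1] (ρ x)) = w then 1 else 0) := by
      have h1 : (fun v => (G.chips ρ v (Function.update c x (c x + 1) v) w : ℤ))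
          = Function.update (fun v => (G.chips ρ v (c v) w : ℤ)) x
              ((G.chips ρ x (c x + 1) w : ℤ)) := by
        funext v
        by_cases h : v = x
        · subst h; simp
        · simp [Function.update_of_ne h]
      rw [h1, Finset.sum_update_of_mem (Finset.mem_univ x), chips_succ]
      rw [← Finset.sum_erase_add _ _ (Finset.mem_univ x), Finset.sdiff_singleton_eq_erase]
      push_cast
      ring
    have hc : ((Function.update c x (c x + 1) w : ℕ) : ℤ)
        = (c w : ℤ) + (if w = x then 1 else 0) := by
      by_cases h : w = x
      · subst h; simp
      · simp [Function.update_of_ne h, h]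
    simp only [state] at hsum hc ⊢
    rw [hsum, hc]
    have : G.nxt ((G.state ρ σ c).1 x) = G.nxt^[c x + 1] (ρ x) := by
      simp [state, Function.iterate_succ_apply']
    simp only [state] at this
    have hite : (if w = G.tgt (G.nxt (G.nxt^[c x] (ρ x))) then (1:ℤ) else 0)
        = (if G.tgt (G.nxt^[c x + 1] (ρ x)) = w then (1:ℤ) else 0) := by
      rw [Function.iterate_succ_apply']
      exact if_congr eq_comm rfl rfl
    erw [hite]
    ring

lemma fireList_state (ρ : G.V → G.E) (σ : G.V → ℤ) :
    ∀ (L : List G.V) (c : G.V → ℕ),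
      G.fireList L (G.state ρ σ c) = G.state ρ σ (fun v => c v + L.count v) := by
  intro L
  induction L with
  | nil => intro c; simp [fireList, state]
  | cons a L ih =>
    intro c
    have : G.fireList (a :: L) (G.state ρ σ c)
        = G.fireList L (G.fire a (G.state ρ σ c)) := rfl
    rw [this, fire_state, ih]
    have : (fun v => Function.update c a (c a + 1) v + L.count v)
        = fun v => c v + (a :: L).count v := by
      funext v
      by_cases h : v = a
      · subst h; simp [List.count_cons]; omega
      · simp [Function.update_of_ne h, List.count_cons, h, Ne.symm h]
    rw [this]

lemma fireList_eq (ρ : G.V → G.E) (σ : G.V → ℤ) (L : List G.V) :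
    G.fireList L (ρ, σ) = G.state ρ σ (fun v => L.count v) := by
  have h0 : G.state ρ σ (fun _ => 0) = (ρ, σ) := by
    simp only [state, chips, Finset.range_zero, Finset.filter_empty, Finset.card_empty]; simp
  have := fireList_state ρ σ L (fun _ => 0)
  rw [h0] at this
  simpa using this

lemma chips_sum (ρ : G.V → G.E) (v : G.V) (u : ℕ) :
    ∑ w, G.chips ρ v u w = u := by
  unfold chips
  simp only [Finset.card_filter]
  rw [Finset.sum_comm]
  simp only [Finset.sum_ite_eq, Finset.mem_univ, if_true, Finset.sum_const, Finset.card_range, smul_eq_mul, mul_one]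

lemma chips_mono (ρ : G.V → G.E) (v : G.V) {u u' : ℕ} (h : u ≤ u') (w : G.V) :
    G.chips ρ v u w ≤ G.chips ρ v u' w :=
  Finset.card_le_card (Finset.filter_subset_filter _ (Finset.range_subset_range.2 h))

lemma chips_lt (ρ : G.V → G.E) (v : G.V) {u u' : ℕ} (h : u < u') :
    G.chips ρ v u (G.tgt (G.nxt^[u'] (ρ v))) + 1
      ≤ G.chips ρ v u' (G.tgt (G.nxt^[u'] (ρ v))) := by
  set w := G.tgt (G.nxt^[u'] (ρ v)) with hw
  have hmem : u' - 1 ∉ (Finset.range u).filter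
      (fun j => G.tgt (G.nxt^[j+1] (ρ v)) = w) := by
    simp only [Finset.mem_filter, Finset.mem_range]
    intro hx
    exact absurd hx.1 (by omega)
  have hsub : insert (u' - 1)
      ((Finset.range u).filter (fun j => G.tgt (G.nxt^[j+1] (ρ v)) = w))
      ⊆ (Finset.range u').filter (fun j => G.tgt (G.nxt^[j+1] (ρ v)) = w) := by
    intro x hx
    rcases Finset.mem_insert.1 hx with rfl | hx
    · simp only [Finset.mem_filter, Finset.mem_range]
      refine ⟨by omega, ?_⟩
      have h1 : u' - 1 + 1 = u' := by omega
      rw [h1]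
    · exact Finset.filter_subset_filter _ (Finset.range_subset_range.2 h.le) hx
  calc G.chips ρ v u w + 1
      = (insert (u' - 1)
          ((Finset.range u).filter (fun j => G.tgt (G.nxt^[j+1] (ρ v)) = w))).card := by
        rw [Finset.card_insert_of_notMem hmem]
        rfl
    _ ≤ _ := Finset.card_le_card hsub

lemma le_aux (G : RotorSystem) (ρ : G.V → G.E) (σ : G.V → ℤ)
    (u₁ u₂ : G.V → ℕ) (hu₁ : ∀ v ∈ G.S, u₁ v = 0)
    (hσ : ∀ w, w ∉ G.S → (G.state ρ σ u₁).2 w = (G.state ρ σ u₂).2 w)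
    (hacyc : G.Acyclic (G.state ρ σ u₁).1) :
    ∀ v, u₁ v ≤ u₂ v := by
  by_contra hcon
  push_neg at hcon
  set A : Finset G.V := Finset.univ.filter (fun v => u₂ v < u₁ v) with hA
  have hmemA : ∀ v, v ∈ A ↔ u₂ v < u₁ v := by
    intro v; simp [hA]
  have hAne : A.Nonempty := by
    obtain ⟨v, hv⟩ := hcon; exact ⟨v, (hmemA v).2 hv⟩
  have hAS : ∀ v ∈ A, v ∉ G.S := by
    intro v hv hvS
    have h1 := hu₁ v hvS
    have h2 := (hmemA v).1 hv
    omega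
  set n : G.V → G.V → ℤ :=
    fun v w => (G.chips ρ v (u₁ v) w : ℤ) - (G.chips ρ v (u₂ v) w : ℤ) with hn
  have ha : ∀ w ∈ A, (u₁ w : ℤ) - u₂ w = ∑ v, n v w := by
    intro w hw
    have h := hσ w (hAS w hw)
    simp only [state] at h
    simp only [hn]
    rw [Finset.sum_sub_distrib]
    linarith
  have hb : ∀ v, ∑ w, n v w = (u₁ v : ℤ) - u₂ v := by
    intro v
    simp only [hn]
    rw [Finset.sum_sub_distrib, ← Nat.cast_sum, ← Nat.cast_sum,
      chips_sum, chips_sum]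
  have hc : ∀ v ∈ A, ∀ w, 0 ≤ n v w := by
    intro v hv w
    have := chips_mono ρ v ((hmemA v).1 hv).le w
    simp only [hn]
    exact sub_nonneg.2 (Nat.cast_le.2 this)
  have hd : ∀ v, v ∉ A → ∀ w, n v w ≤ 0 := by
    intro v hv w
    have h1 : u₁ v ≤ u₂ v := by
      by_contra h2; exact hv ((hmemA v).2 (by omega))
    have := chips_mono ρ v h1 w
    simp only [hn]
    exact sub_nonpos.2 (Nat.cast_le.2 this)
  -- T v := contribution of v into A, b v := its upper bound
  set T : G.V → ℤ := fun v => ∑ w ∈ A, n v w with hT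
  set b : G.V → ℤ := fun v => if v ∈ A then (u₁ v : ℤ) - u₂ v else 0 with hbdef
  have hTle : ∀ v, T v ≤ b v := by
    intro v
    by_cases hv : v ∈ A
    · have h1 : T v ≤ ∑ w, n v w :=
        Finset.sum_le_sum_of_subset_of_nonneg (Finset.subset_univ A)
          (fun w _ _ => hc v hv w)
      simp only [hbdef, if_pos hv]
      rw [← hb v]; exact h1
    · simp only [hbdef, if_neg hv]
      exact Finset.sum_nonpos (fun w _ => hd v hv w)
  have hsumT : ∑ v, T v = ∑ w ∈ A, ((u₁ w : ℤ) - u₂ w) := by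
    simp only [hT]
    rw [Finset.sum_comm]
    exact Finset.sum_congr rfl (fun w hw => (ha w hw).symm)
  have hsumb : ∑ v, b v = ∑ w ∈ A, ((u₁ w : ℤ) - u₂ w) := by
    simp only [hbdef]
    rw [Finset.sum_ite_mem, Finset.univ_inter]
  have hTb : ∀ v, T v = b v := by
    have h0 : ∑ v, (b v - T v) = 0 := by
      rw [Finset.sum_sub_distrib, hsumb, hsumT]; ring
    intro v
    have := (Finset.sum_eq_zero_iff_of_nonneg
      (fun v _ => sub_nonneg.2 (hTle v))).1 h0 v (Finset.mem_univ v)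
    linarith
  -- all chips emitted by v ∈ A beyond step u₂ v stay in A
  have hzero : ∀ v ∈ A, ∀ w, w ∉ A → n v w = 0 := by
    intro v hv
    have h1 : ∑ w ∈ Finset.univ \ A, n v w = 0 := by
      have h3 : ∑ w ∈ A, n v w = (u₁ v : ℤ) - u₂ v := by
        have := hTb v
        simp only [hT, hbdef, if_pos hv] at this
        exact this
      rw [Finset.sum_sdiff_eq_sub (Finset.subset_univ A)]
      linarith [hb v, h3]
    intro w hw
    exact (Finset.sum_eq_zero_iff_of_nonneg
      (fun w hw' => hc v hv w)).1 h1 w (by simp [Finset.mem_sdiff, hw])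
  have htgt : ∀ v ∈ A, G.tgt (G.nxt^[u₁ v] (ρ v)) ∈ A := by
    intro v hv
    by_contra hw
    have h1 := hzero v hv _ hw
    have h2 := chips_lt ρ v ((hmemA v).1 hv)
    simp only [hn] at h1
    have := Nat.cast_le (α := ℤ) |>.2 h2
    push_cast at this
    linarith
  -- build a directed cycle inside A, contradicting acyclicity
  obtain ⟨a, haA⟩ := hAne
  set g : G.V → G.V := fun x => G.tgt ((G.state ρ σ u₁).1 x) with hg
  have hgA : ∀ x ∈ A, g x ∈ A := by
    intro x hx
    simpa [hg, state] using htgt x hx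
  set f : ℕ → G.V := fun i => g^[i] a with hf
  have hfsucc : ∀ i, f (i + 1) = g (f i) := by
    intro i; simp only [hf]; rw [Function.iterate_succ_apply']
  have hfA : ∀ i, f i ∈ A := by
    intro i
    induction i with
    | zero => simpa [hf] using haA
    | succ i ih => rw [hfsucc]; exact hgA _ ih
  obtain ⟨i, j, hij, hfe⟩ := Finite.exists_ne_map_eq_of_infinite f
  rcases hij.lt_or_gt with hlt | hlt
  · exact hacyc (j - i) (fun m => f (i + m)) (by omega)
      (fun m _ => hAS _ (hfA (i + m)))
      (fun m _ => by
        show f (i + (m + 1)) = G.tgt ((G.state ρ σ u₁).1 (f (i + m)))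
        rw [← Nat.add_assoc, hfsucc, hg])
      (by simpa [Nat.add_sub_cancel' hlt.le] using hfe.symm)
  · exact hacyc (i - j) (fun m => f (j + m)) (by omega)
      (fun m _ => hAS _ (hfA (j + m)))
      (fun m _ => by
        show f (j + (m + 1)) = G.tgt ((G.state ρ σ u₁).1 (f (j + m)))
        rw [← Nat.add_assoc, hfsucc, hg])
      (by simpa [Nat.add_sub_cancel' hlt.le] using hfe)

end RotorSystem

/-- **Strong Abelian Property** (Theorem 2.1).  Let `ρ` be a rotor configuration
and `σ` a chip configuration on `G`.  Given `u₁, u₂ : V' → ℕ` (encoded as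
functions on `V` vanishing on `S`), write `F^{uᵢ}(ρ,σ) = (ρᵢ,σᵢ)`, where `F^{uᵢ}`
is realized by firing along any list `Lᵢ` containing each vertex `v` exactly
`uᵢ(v)` times.  If `σ₁ = σ₂` on `V'` and both `ρ₁` and `ρ₂` are acyclic, then
`u₁ = u₂`. -/
theorem strong_abelian_property (G : RotorSystem)
    (ρ : G.V → G.E) (hρ : G.IsRotorConfig ρ) (σ : G.V → ℤ)
    (u₁ u₂ : G.V → ℕ) (hu₁ : ∀ v ∈ G.S, u₁ v = 0) (hu₂ : ∀ v ∈ G.S, u₂ v = 0)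
    (L₁ L₂ : List G.V)
    (hL₁ : ∀ v, L₁.count v = u₁ v) (hL₂ : ∀ v, L₂.count v = u₂ v)
    (ρ₁ ρ₂ : G.V → G.E) (σ₁ σ₂ : G.V → ℤ)
    (h₁ : G.fireList L₁ (ρ, σ) = (ρ₁, σ₁))
    (h₂ : G.fireList L₂ (ρ, σ) = (ρ₂, σ₂))
    (hσ : ∀ v, v ∉ G.S → σ₁ v = σ₂ v)
    (hacyc₁ : G.Acyclic ρ₁) (hacyc₂ : G.Acyclic ρ₂) :
    u₁ = u₂ := by
  have hc1 : (fun v => L₁.count v) = u₁ := funext hL₁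
  have hc2 : (fun v => L₂.count v) = u₂ := funext hL₂
  have e₁ : G.state ρ σ u₁ = (ρ₁, σ₁) := by
    rw [← hc1, ← RotorSystem.fireList_eq]; exact h₁
  have e₂ : G.state ρ σ u₂ = (ρ₂, σ₂) := by
    rw [← hc2, ← RotorSystem.fireList_eq]; exact h₂
  have hσ' : ∀ w, w ∉ G.S → (G.state ρ σ u₁).2 w = (G.state ρ σ u₂).2 w := by
    intro w hw; rw [e₁, e₂]; exact hσ w hw
  have ha1 : G.Acyclic (G.state ρ σ u₁).1 := by rw [e₁]; exact hacyc₁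
  have ha2 : G.Acyclic (G.state ρ σ u₂).1 := by rw [e₂]; exact hacyc₂
  funext v
  exact le_antisymm (RotorSystem.le_aux G ρ σ u₁ u₂ hu₁ hσ' ha1 v)
    (RotorSystem.le_aux G ρ σ u₂ u₁ hu₂ (fun w hw => (hσ' w hw).symm) ha2 v)
end

section
/- Let ρ be a rotor configuration and σ ≥ 0 a chip configuration on a finite directed multigraph G with nonempty sink set S and V' = V∖S. Let v₁, v₂, …, v_k be a complete legal firing sequence for (ρ,σ): a sequence of vertices of V' such that, firing them in order starting from (ρ,σ), every fired vertex holds at least one chip at the moment it is fired, and the final chip configuration is 0 at every vertex of V'. Let u₁(v) = #{1 ≤ j ≤ k : v_j = v} be the odometer of this sequence. If u₁(v) > 0 for all v ∈ V', then the final rotor configuration ρ₁ (given by F^{u₁}(ρ,σ) = (ρ₁,σ₁)) is acyclic. -/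
namespace RotorSystem

variable (G : RotorSystem)

lemma fireList_append' (M N : List G.V) (s : (G.V → G.E) × (G.V → ℤ)) :
    G.fireList (M ++ N) s = G.fireList N (G.fireList M s) :=
  List.foldl_append

lemma fireList_cons' (v : G.V) (M : List G.V) (s : (G.V → G.E) × (G.V → ℤ)) :
    G.fireList (v :: M) s = G.fireList M (G.fire v s) := rfl

lemma rotor_not_mem (M : List G.V) (v : G.V) (hv : v ∉ M)
    (s : (G.V → G.E) × (G.V → ℤ)) : (G.fireList M s).1 v = s.1 v := by
  induction M generalizing s with
  | nil => rfl
  | cons a M ih =>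
    rw [fireList_cons', ih (fun h => hv (List.mem_cons_of_mem _ h)) _]
    have hva : v ≠ a := fun h => hv (h ▸ List.mem_cons_self (a := a) (l := M))
    simp [fire, Function.update_of_ne hva]

lemma chip_mono (M : List G.V) (w : G.V) (hw : w ∉ M)
    (s : (G.V → G.E) × (G.V → ℤ)) : s.2 w ≤ (G.fireList M s).2 w := by
  induction M generalizing s with
  | nil => exact le_refl _
  | cons a M ih =>
    refine le_trans ?_ (ih (fun h => hw (List.mem_cons_of_mem _ h)) _)
    have hwa : w ≠ a := fun h => hw (h ▸ List.mem_cons_self (a := a) (l := M))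
    simp only [fire, fireList_cons']
    simp only [hwa, if_false]
    split_ifs <;> omega

lemma fireList_take_succ (L : List G.V) (j : ℕ) (hj : j < L.length)
    (s : (G.V → G.E) × (G.V → ℤ)) :
    G.fireList (L.take (j + 1)) s = G.fire (L.get ⟨j, hj⟩) (G.fireList (L.take j) s) := by
  rw [List.take_succ, List.getElem?_eq_getElem hj]
  rw [fireList_append']
  rfl

end RotorSystem


/-- Let `ρ` be a rotor configuration and `σ ≥ 0` a chip configuration on `G`,
and let `v₁, …, v_k` (the list `L`) be a complete legal firing sequence for
`(ρ,σ)`: a sequence of vertices of `V'` such that each fired vertex holds at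
least one chip at the moment it is fired, and the final chip configuration
vanishes on `V'`.  If its odometer `u₁(v) = #{j : v_j = v} = L.count v` is
positive for every `v ∈ V'`, then the final rotor configuration `ρ₁` is
acyclic. -/
theorem complete_legal_acyclic (G : RotorSystem)
    (ρ : G.V → G.E) (hρ : G.IsRotorConfig ρ)
    (σ : G.V → ℤ) (hσ : ∀ v, 0 ≤ σ v)
    (L : List G.V) (hLS : ∀ v ∈ L, v ∉ G.S)
    (hlegal : ∀ (j : ℕ) (hj : j < L.length),
      1 ≤ (G.fireList (L.take j) (ρ, σ)).2 (L.get ⟨j, hj⟩))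
    (hcomplete : ∀ v, v ∉ G.S → (G.fireList L (ρ, σ)).2 v = 0)
    (hpos : ∀ v, v ∉ G.S → 0 < L.count v) :
    G.Acyclic (G.fireList L (ρ, σ)).1 := by
  intro k f hk hfS hstep hcontra
  -- chips stay nonnegative along the legal sequence
  have key : ∀ j, j ≤ L.length → ∀ w, 0 ≤ (G.fireList (L.take j) (ρ, σ)).2 w := by
    intro j
    induction j with
    | zero => intro _ w; simpa [RotorSystem.fireList] using hσ w
    | succ j ih =>
      intro hj w
      have hjl : j < L.length := hj
      rw [G.fireList_take_succ L j hjl]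
      simp only [RotorSystem.fire]
      have h1 := ih (le_of_lt hjl) w
      have h2 := hlegal j hjl
      by_cases hwv : w = L.get ⟨j, hjl⟩
      · subst hwv
        simp only [if_pos rfl]
        split_ifs <;> omega
      · simp only [if_neg hwv]
        split_ifs <;> omega
  -- last occurrence index of a vertex in L
  set J : G.V → ℕ := fun v => Nat.findGreatest (fun j => L[j]? = some v) L.length with hJ
  have hJget : ∀ v, v ∉ G.S → L[J v]? = some v := by
    intro v hv
    have hmem : v ∈ L := List.count_pos_iff.mp (hpos v hv)
    obtain ⟨⟨j, hjl⟩, hjv⟩ := List.mem_iff_get.mp hmem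
    have hP : L[j]? = some v := by
      rw [List.getElem?_eq_getElem hjl]; exact congrArg some hjv
    exact Nat.findGreatest_spec (P := fun j => L[j]? = some v) (le_of_lt hjl) hP
  have hJmax : ∀ v (j : ℕ), j < L.length → L[j]? = some v → j ≤ J v := by
    intro v j hjl hjv
    by_contra h
    exact Nat.findGreatest_is_greatest (P := fun j => L[j]? = some v) (Nat.lt_of_not_le h) (le_of_lt hjl) hjv
  have hJlt : ∀ v, v ∉ G.S → J v < L.length := by
    intro v hv
    have := hJget v hv
    by_contra h
    rw [List.getElem?_eq_none (Nat.le_of_not_lt h)] at this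
    cases this
  -- the cycle vertex whose last firing is latest
  obtain ⟨i₀, hi₀mem, hi₀max⟩ := (Finset.range k).exists_max_image (fun i => J (f i))
    ⟨0, Finset.mem_range.mpr hk⟩
  have hi₀ : i₀ < k := Finset.mem_range.mp hi₀mem
  set v : G.V := f i₀ with hv
  set w : G.V := f (i₀ + 1) with hw
  have hvS : v ∉ G.S := hfS i₀ hi₀
  -- w equals some cycle vertex f i, i < k
  have hwcyc : ∃ i < k, f i = w := by
    by_cases h : i₀ + 1 < k
    · exact ⟨i₀ + 1, h, rfl⟩
    · have : i₀ + 1 = k := le_antisymm hi₀ (Nat.le_of_not_lt h)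
      exact ⟨0, hk, by rw [hw, this, hcontra]⟩
  obtain ⟨iw, hiw, hiww⟩ := hwcyc
  have hwS : w ∉ G.S := hiww ▸ hfS iw hiw
  have hJw : J w ≤ J v := hiww ▸ hi₀max iw (Finset.mem_range.mpr hiw)
  set Jv : ℕ := J v with hJv
  have hJvlt : Jv < L.length := hJlt v hvS
  have hgetv : L.get ⟨Jv, hJvlt⟩ = v := by
    have := hJget v hvS
    rw [List.getElem?_eq_getElem hJvlt] at this
    exact Option.some.inj this
  -- v and w do not occur in L after index Jv
  have hnotafter : ∀ x : G.V, J x ≤ Jv → x ∉ L.drop (Jv + 1) := by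
    intro x hx hmem
    obtain ⟨⟨m, hml⟩, hmx⟩ := List.mem_iff_get.mp hmem
    have hml' : Jv + 1 + m < L.length := by
      have := hml; simp [List.length_drop] at this; omega
    have hLm : L[Jv + 1 + m]? = some x := by
      rw [List.getElem?_eq_getElem hml']
      refine congrArg some ?_
      rw [← hmx]
      simp [List.get_eq_getElem, List.getElem_drop]
    have := hJmax x (Jv + 1 + m) hml' hLm
    omega
  have hvna : v ∉ L.drop (Jv + 1) := hnotafter v (le_refl _)
  have hwna : w ∉ L.drop (Jv + 1) := hnotafter w hJw
  -- decompose the firing sequence at index Jv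
  set sJ : (G.V → G.E) × (G.V → ℤ) := G.fireList (L.take Jv) (ρ, σ) with hsJ
  have hdecomp : G.fireList L (ρ, σ) =
      G.fireList (L.drop (Jv + 1)) (G.fire v sJ) := by
    conv_lhs => rw [← List.take_append_drop (Jv + 1) L]
    rw [G.fireList_append']
    rw [G.fireList_take_succ L Jv hJvlt, hgetv]
  -- the final rotor at v is the rotor just after its last firing
  have hrotor : (G.fireList L (ρ, σ)).1 v = G.nxt (sJ.1 v) := by
    rw [hdecomp, G.rotor_not_mem _ v hvna]
    simp [RotorSystem.fire]
  -- w is the target of the final rotor edge at v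
  have hwt : w = G.tgt (G.nxt (sJ.1 v)) := by
    have := hstep i₀ hi₀
    rw [← hv, ← hw, hrotor] at this
    exact this
  -- just after v's last firing, w holds at least one chip
  have hchip1 : 1 ≤ (G.fire v sJ).2 w := by
    simp only [RotorSystem.fire, if_pos hwt]
    have h1 := key Jv (le_of_lt hJvlt) w
    rw [← hsJ] at h1
    by_cases hwv : w = v
    · have h2 := hlegal Jv hJvlt
      rw [hgetv, ← hsJ] at h2
      simp only [if_pos hwv]
      rw [hwv] at h1 ⊢
      omega
    · simp only [if_neg hwv]
      omega
  -- and keeps it until the end: contradiction with completeness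
  have hfinal : 1 ≤ (G.fireList L (ρ, σ)).2 w := by
    rw [hdecomp]
    exact le_trans hchip1 (G.chip_mono _ w hwna _)
  have := hcomplete w hwS
  omega
end

section
/- Fix n ≥ 1 and work in the induced subgraph D_n of the layered square lattice Ẑ², with the sites of the outer layer L_n taken as sinks. Define u_n = u'_n − 1_C as follows: for z = (x,y) ∈ D_n write ℓ_z = n−|x|−|y|; u'_n(o) = 2n(n+1) and u'_n(z) = ℓ_z(ℓ_z+1) for z ≠ o; C = ⋃_{i=0}^{3} Rⁱ(C₂ ∪ C₃) with C₂ = {(x,y) ∈ Q ∩ D_{n−1} : x > 0, y ≥ 2, ℓ_{(x,y)} ≡ 2 (mod 4)} and C₃ = {(x,y) ∈ Q ∩ D_{n−1} : x > 0, y ≥ 1, ℓ_{(x,y)} ≡ 3 (mod 4)}. Let ρ₀ be the rotor configuration ρ₀(z) = e_z^0 and define (ρ_n, σ_n) = F^{u_n}(ρ₀, (2n²+2n+1)δ_o). Then the rotor configuration ρ_n on D_{n−1} is acyclic, i.e., the subgraph formed by the rotor edges {ρ_n(z) : z ∈ D_{n−1}} has no directed cycles. -/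
/-- Clockwise rotation `R` by 90 degrees on `ℤ²` (it sends `e₂ = (0,1)` to `e₁ = (1,0)`). -/
def Rot (z : ℤ × ℤ) : ℤ × ℤ := (z.2, -z.1)

/-- The index `j ∈ {0,1,2,3}` such that `z ∈ RʲQ`, where
`Q = {(x,y) : x ≥ 0, y > 0}` (meaningful for `z ≠ o`). -/
def quadIdx (z : ℤ × ℤ) : ℕ :=
  if 0 ≤ z.1 ∧ 0 < z.2 then 0
  else if 0 < z.1 ∧ z.2 ≤ 0 then 1
  else if z.1 ≤ 0 ∧ z.2 < 0 then 2
  else 3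

/-- The target of the directed edge `e_z^i` of the layered square lattice `Ẑ²`:
for `z = Rʲw ≠ o` with `w = (x,y) ∈ Q`, the edge `e_z^i` points to `z + Rʲe₂`
if `i = 2` and `x = 0` (i.e. `z` lies on one of the axes), and to `z + R^{i+j}e₂`
otherwise; the edges at the origin point to `R^i e₂`. -/
def targ (z : ℤ × ℤ) (i : Fin 4) : ℤ × ℤ :=
  if z = (0, 0) then Rot^[(i : ℕ)] (0, 1)
  else if i = 2 ∧ (z.1 = 0 ∨ z.2 = 0) then z + Rot^[quadIdx z] (0, 1)
  else z + Rot^[(i : ℕ) + quadIdx z] (0, 1)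

/-- A rotor configuration on `Ẑ²`: the rotor at `z` is the edge `e_z^{ρ(z)}`. -/
abbrev RotorConfig := (ℤ × ℤ) → Fin 4

/-- Firing a vertex `v` of `Ẑ²`: the rotor at `v` is advanced from `e_v^i` to
`e_v^{i+1 mod 4}`, one chip is removed at `v`, and one chip is added at the
target of the new rotor.  (Chip counts may go negative.) -/
def fireLat (v : ℤ × ℤ) (s : RotorConfig × ((ℤ × ℤ) → ℤ)) :
    RotorConfig × ((ℤ × ℤ) → ℤ) :=
  (Function.update s.1 v (s.1 v + 1),
   fun w => s.2 w - (if w = v then 1 else 0)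
              + (if w = targ v (s.1 v + 1) then 1 else 0))

/-- Firing the vertices of a list in order.  `F^u (ρ,σ)` is `fireLatList L (ρ,σ)`
for any list `L` in which each vertex `v` occurs exactly `u(v)` times (by
commutativity of the firing operators the result does not depend on `L`). -/
def fireLatList (L : List (ℤ × ℤ)) (s : RotorConfig × ((ℤ × ℤ) → ℤ)) :
    RotorConfig × ((ℤ × ℤ) → ℤ) :=
  L.foldl (fun s v => fireLat v s) s

/-- `ℓ_z = n - |x| - |y|` for `z = (x,y)`. -/
def ell (n : ℕ) (z : ℤ × ℤ) : ℤ := (n : ℤ) - |z.1| - |z.2|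

/-- `u'_n(o) = 2n(n+1)`, `u'_n(z) = ℓ_z (ℓ_z + 1)` for `o ≠ z ∈ D_{n-1}`
(and `u'_n = 0` off `D_{n-1}`, i.e. `u'_n` is a function on `D_{n-1}`). -/
def uAux (n : ℕ) (z : ℤ × ℤ) : ℕ :=
  if z = (0, 0) then 2 * n * (n + 1)
  else if |z.1| + |z.2| ≤ (n : ℤ) - 1 then (ell n z * (ell n z + 1)).toNat
  else 0

/-- `C₂ = {(x,y) ∈ Q ∩ D_{n-1} : x > 0, y ≥ 2, ℓ_{(x,y)} ≡ 2 mod 4}`. -/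
def C2 (n : ℕ) : Set (ℤ × ℤ) :=
  {w | 0 < w.1 ∧ 2 ≤ w.2 ∧ |w.1| + |w.2| ≤ (n : ℤ) - 1 ∧ ell n w % 4 = 2}

/-- `C₃ = {(x,y) ∈ Q ∩ D_{n-1} : x > 0, y ≥ 1, ℓ_{(x,y)} ≡ 3 mod 4}`. -/
def C3 (n : ℕ) : Set (ℤ × ℤ) :=
  {w | 0 < w.1 ∧ 1 ≤ w.2 ∧ |w.1| + |w.2| ≤ (n : ℤ) - 1 ∧ ell n w % 4 = 3}

/-- `C = ⋃_{i=0}^{3} Rⁱ (C₂ ∪ C₃)`. -/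
def Cset (n : ℕ) : Set (ℤ × ℤ) :=
  {z | ∃ i < 4, ∃ w ∈ C2 n ∪ C3 n, z = Rot^[i] w}

open Classical in
/-- `u_n = u'_n - 1_C`. -/
noncomputable def uOdo (n : ℕ) (z : ℤ × ℤ) : ℕ :=
  uAux n z - (if z ∈ Cset n then 1 else 0)

/-- The initial rotor configuration `ρ₀(z) = e_z^0`. -/
def rho0 : RotorConfig := fun _ => 0

/-- The chip configuration `(2n² + 2n + 1) δ_o`. -/
def sigma0 (n : ℕ) : (ℤ × ℤ) → ℤ :=
  fun z => if z = (0, 0) then 2 * (n : ℤ) ^ 2 + 2 * n + 1 else 0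

open Fin.NatCast

lemma rot0 (p : ℤ × ℤ) : Rot^[0] p = p := rfl
lemma rot1 (p : ℤ × ℤ) : Rot^[1] p = (p.2, -p.1) := rfl
lemma rot2 (p : ℤ × ℤ) : Rot^[2] p = (-p.1, -p.2) := by
  show Rot (Rot p) = _; simp [Rot]
lemma rot3 (p : ℤ × ℤ) : Rot^[3] p = (-p.2, p.1) := by
  show Rot (Rot (Rot p)) = _; simp [Rot]
lemma rot4 (p : ℤ × ℤ) : Rot^[4] p = p := by
  show Rot (Rot (Rot (Rot p))) = p; simp [Rot]
lemma rot_mod (k : ℕ) (p : ℤ × ℤ) : Rot^[k] p = Rot^[k % 4] p := by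
  conv_lhs => rw [← Nat.mod_add_div k 4, Function.iterate_add_apply, Function.iterate_mul]
  rw [Function.iterate_fixed (rot4 p)]
lemma rot_ne_zero {z : ℤ × ℤ} (hz : z ≠ (0,0)) : Rot z ≠ (0,0) := by
  simp only [Rot, Prod.ext_iff, ne_eq, not_and_or] at hz ⊢
  rcases hz with h | h
  · right; simpa using h
  · left; exact h
lemma rot_add (a b : ℤ × ℤ) : Rot (a + b) = Rot a + Rot b := by
  simp [Rot, Prod.ext_iff]; ring
lemma quadIdx_rot {z : ℤ × ℤ} (hz : z ≠ (0,0)) : quadIdx (Rot z) = (quadIdx z + 1) % 4 := by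
  have hz' : ¬(z.1 = 0 ∧ z.2 = 0) := by
    simpa [Prod.ext_iff] using hz
  unfold quadIdx Rot
  split_ifs <;> omega
lemma targ_rot {z : ℤ × ℤ} (hz : z ≠ (0,0)) (i : Fin 4) :
    targ (Rot z) i = Rot (targ z i) := by
  have hz2 := rot_ne_zero hz
  have hax : ((Rot z).1 = 0 ∨ (Rot z).2 = 0) ↔ (z.1 = 0 ∨ z.2 = 0) := by
    simp [Rot, neg_eq_zero, or_comm]
  unfold targ
  rw [if_neg hz2, if_neg hz]
  by_cases hc : i = 2 ∧ (z.1 = 0 ∨ z.2 = 0)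
  · rw [if_pos ⟨hc.1, hax.mpr hc.2⟩, if_pos hc, rot_add, quadIdx_rot hz]
    congr 1
    rw [← rot_mod, Function.iterate_succ_apply']
  · rw [if_neg (fun hcon => hc ⟨hcon.1, hax.mp hcon.2⟩), if_neg hc, rot_add, quadIdx_rot hz]
    congr 1
    have h1 : Rot (Rot^[(i:ℕ) + quadIdx z] ((0:ℤ),(1:ℤ))) = Rot^[(i:ℕ) + quadIdx z + 1] (0,1) :=
      (Function.iterate_succ_apply' Rot _ _).symm
    rw [h1, rot_mod, rot_mod ((i:ℕ) + quadIdx z + 1)]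
    congr 1
    omega

lemma mem_Cset_ne {n : ℕ} {z : ℤ × ℤ} (h : z ∈ Cset n) : z.1 ≠ 0 ∧ z.2 ≠ 0 := by
  obtain ⟨i, hi, w, hw, rfl⟩ := h
  have hw1 : 0 < w.1 ∧ 0 < w.2 := by
    rcases hw with h | h
    · exact ⟨h.1, by have := h.2.1; omega⟩
    · exact ⟨h.1, by have := h.2.1; omega⟩
  interval_cases i <;>
    simp only [rot0, rot1, rot2, rot3] <;> constructor <;> simp <;> omega

lemma ell_rot (n : ℕ) (z : ℤ × ℤ) : ell n (Rot z) = ell n z := by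
  simp only [ell, Rot, abs_neg]; ring

lemma rot_eq_zero_iff {z : ℤ × ℤ} : Rot z = (0,0) ↔ z = (0,0) := by
  simp [Rot, Prod.ext_iff]; tauto

lemma abs_rot (z : ℤ × ℤ) : |(Rot z).1| + |(Rot z).2| = |z.1| + |z.2| := by
  simp [Rot, abs_neg]; ring

lemma uAux_rot (n : ℕ) (z : ℤ × ℤ) : uAux n (Rot z) = uAux n z := by
  unfold uAux
  rw [ell_rot, abs_rot]
  by_cases hz : z = (0,0)
  · rw [if_pos (rot_eq_zero_iff.mpr hz), if_pos hz]
  · rw [if_neg (fun h => hz (rot_eq_zero_iff.mp h)), if_neg hz]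

lemma mem_Cset_rot_fwd {n : ℕ} {z : ℤ × ℤ} (h : z ∈ Cset n) : Rot z ∈ Cset n := by
  obtain ⟨i, hi, w, hw, rfl⟩ := h
  refine ⟨(i+1) % 4, by omega, w, hw, ?_⟩
  rw [show Rot (Rot^[i] w) = Rot^[i+1] w from (Function.iterate_succ_apply' Rot i w).symm, rot_mod]

lemma mem_Cset_rot (n : ℕ) (z : ℤ × ℤ) : Rot z ∈ Cset n ↔ z ∈ Cset n := by
  constructor
  · intro h
    have h3 := mem_Cset_rot_fwd (mem_Cset_rot_fwd (mem_Cset_rot_fwd h))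
    have : Rot (Rot (Rot (Rot z))) = z := rot4 z
    rwa [this] at h3
  · exact mem_Cset_rot_fwd

lemma uOdo_rot (n : ℕ) (z : ℤ × ℤ) : uOdo n (Rot z) = uOdo n z := by
  unfold uOdo
  rw [uAux_rot]
  by_cases h : z ∈ Cset n
  · rw [if_pos ((mem_Cset_rot n z).mpr h), if_pos h]
  · rw [if_neg (fun hc => h ((mem_Cset_rot n z).mp hc)), if_neg h]

lemma mem_Cset_Q0 {n : ℕ} {z : ℤ × ℤ} (hx : 0 < z.1) (hy : 0 < z.2)
    (hD : |z.1| + |z.2| ≤ (n:ℤ) - 1) :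
    z ∈ Cset n ↔ (ell n z % 4 = 2 ∧ 2 ≤ z.2) ∨ ell n z % 4 = 3 := by
  constructor
  · rintro ⟨i, hi, w, hw, rfl⟩
    have hw1 : 0 < w.1 ∧ 1 ≤ w.2 := by
      rcases hw with h | h
      · exact ⟨h.1, by have := h.2.1; omega⟩
      · exact ⟨h.1, h.2.1⟩
    interval_cases i <;> simp only [rot0, rot1, rot2, rot3] at hx hy ⊢
    · rcases hw with h | h
      · exact Or.inl ⟨h.2.2.2, h.2.1⟩
      · exact Or.inr h.2.2.2
    · simp at hy; omega
    · simp at hx; omega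
    · simp at hx; omega
  · intro h
    refine ⟨0, by omega, z, ?_, rfl⟩
    rcases h with ⟨h2, hy2⟩ | h3
    · exact Or.inl ⟨hx, hy2, hD, h2⟩
    · exact Or.inr ⟨hx, hy, hD, h3⟩

/-- Potential function that strictly decreases along rotor edges of `ρ_n`. -/
def Mpot (n : ℕ) (z : ℤ × ℤ) : ℤ :=
  if z.1 = 0 ∨ z.2 = 0 then -(|z.1| + |z.2|)
  else if ell n z % 4 = 0 ∨ ell n z % 4 = 3 then
    (if 0 < z.1 * z.2 then n * |z.1| - |z.2| else n * |z.2| - |z.1|)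
  else
    (if 0 < z.1 * z.2 then n * |z.2| - |z.1| else n * |z.1| - |z.2|)

lemma Mpot_rot (n : ℕ) (z : ℤ × ℤ) : Mpot n (Rot z) = Mpot n z := by
  have haxiff : ((Rot z).1 = 0 ∨ (Rot z).2 = 0) ↔ (z.1 = 0 ∨ z.2 = 0) := by
    simp [Rot, neg_eq_zero, or_comm]
  unfold Mpot
  rw [ell_rot]
  by_cases hax : z.1 = 0 ∨ z.2 = 0
  · rw [if_pos (haxiff.mpr hax), if_pos hax, abs_rot]
  · rw [if_neg (fun h => hax (haxiff.mp h)), if_neg hax]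
    push_neg at hax
    have hp : (Rot z).1 * (Rot z).2 = -(z.1 * z.2) := by simp [Rot]; ring
    have hne : z.1 * z.2 ≠ 0 := mul_ne_zero hax.1 hax.2
    have habs1 : |(Rot z).1| = |z.2| := by simp [Rot]
    have habs2 : |(Rot z).2| = |z.1| := by simp [Rot]
    by_cases hpos : 0 < z.1 * z.2
    · have hR : ¬ 0 < (Rot z).1 * (Rot z).2 := by rw [hp]; push_neg; linarith
      by_cases hres : ell n z % 4 = 0 ∨ ell n z % 4 = 3
      · rw [if_pos hres, if_pos hres, if_neg hR, if_pos hpos, habs1, habs2]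
      · rw [if_neg hres, if_neg hres, if_neg hR, if_pos hpos, habs1, habs2]
    · have hlt : z.1 * z.2 < 0 := (not_lt.mp hpos).lt_of_ne hne
      have hR : 0 < (Rot z).1 * (Rot z).2 := by rw [hp]; linarith
      by_cases hres : ell n z % 4 = 0 ∨ ell n z % 4 = 3
      · rw [if_pos hres, if_pos hres, if_pos hR, if_neg hpos, habs1, habs2]
      · rw [if_neg hres, if_neg hres, if_pos hR, if_neg hpos, habs1, habs2]

lemma Mpot_axis (n : ℕ) {z : ℤ × ℤ} (h : z.1 = 0 ∨ z.2 = 0) :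
    Mpot n z = -(|z.1| + |z.2|) := if_pos h

lemma ell_pp {n : ℕ} {x y : ℤ} (hx : 0 < x) (hy : 0 < y) :
    ell n (x, y) = (n:ℤ) - x - y := by
  unfold ell
  rw [show |((x,y) : ℤ×ℤ).1| = x from abs_of_pos hx,
      show |((x,y) : ℤ×ℤ).2| = y from abs_of_pos hy]

lemma Mpot_pp03 (n : ℕ) {x y : ℤ} (hx : 0 < x) (hy : 0 < y)
    (hres : ((n:ℤ) - x - y) % 4 = 0 ∨ ((n:ℤ) - x - y) % 4 = 3) :
    Mpot n (x, y) = n * x - y := by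
  unfold Mpot
  rw [if_neg (by push_neg; exact ⟨ne_of_gt hx, ne_of_gt hy⟩)]
  rw [show ell n (x,y) = (n:ℤ) - x - y from ell_pp hx hy]
  rw [if_pos hres, if_pos (show (0:ℤ) < (x,y).1 * (x,y).2 from mul_pos hx hy)]
  rw [show |((x,y) : ℤ×ℤ).1| = x from abs_of_pos hx,
      show |((x,y) : ℤ×ℤ).2| = y from abs_of_pos hy]

lemma Mpot_pp12 (n : ℕ) {x y : ℤ} (hx : 0 < x) (hy : 0 < y)
    (hres : ¬(((n:ℤ) - x - y) % 4 = 0 ∨ ((n:ℤ) - x - y) % 4 = 3)) :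
    Mpot n (x, y) = n * y - x := by
  unfold Mpot
  rw [if_neg (by push_neg; exact ⟨ne_of_gt hx, ne_of_gt hy⟩)]
  rw [show ell n (x,y) = (n:ℤ) - x - y from ell_pp hx hy]
  rw [if_neg hres, if_pos (show (0:ℤ) < (x,y).1 * (x,y).2 from mul_pos hx hy)]
  rw [show |((x,y) : ℤ×ℤ).1| = x from abs_of_pos hx,
      show |((x,y) : ℤ×ℤ).2| = y from abs_of_pos hy]

lemma fire_rho (L : List (ℤ × ℤ)) (s : RotorConfig × ((ℤ × ℤ) → ℤ)) (z : ℤ × ℤ) :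
    (fireLatList L s).1 z = s.1 z + (L.count z : Fin 4) := by
  induction L generalizing s with
  | nil => simp [fireLatList]
  | cons v L ih =>
    rw [show fireLatList (v::L) s = fireLatList L (fireLat v s) from rfl, ih]
    by_cases hzv : z = v
    · subst hzv
      simp only [fireLat, Function.update_self, List.count_cons, beq_self_eq_true, if_true]
      push_cast
      rw [add_assoc, add_comm (1 : Fin 4)]
    · simp only [fireLat, Function.update_of_ne hzv, List.count_cons]
      rw [if_neg (by simpa using (Ne.symm hzv))]
      simp
lemma addpt (a b c d : ℤ) : ((a,b) : ℤ×ℤ) + (c,d) = (a+c, b+d) := rfl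

lemma targ_eval {z : ℤ × ℤ} (hz : z ≠ (0,0)) (i : Fin 4)
    (h2 : ¬(i = 2 ∧ (z.1 = 0 ∨ z.2 = 0))) :
    targ z i = z + Rot^[(i:ℕ) + quadIdx z] (0,1) := by
  unfold targ; rw [if_neg hz, if_neg h2]

lemma quadIdx_pp {x y : ℤ} (hx : 0 ≤ x) (hy : 0 < y) : quadIdx (x,y) = 0 := by
  unfold quadIdx; rw [if_pos ⟨hx, hy⟩]

lemma fin4_cast {m : ℕ} {r : ℕ} (h : m % 4 = r) (hr : r < 4) :
    (m : Fin 4) = ⟨r, hr⟩ := by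
  apply Fin.ext
  rw [Fin.val_natCast]
  exact h

lemma keyQ0 (n : ℕ) (hn : 1 ≤ n) (x y : ℤ) (hx : 0 < x) (hy : 0 < y)
    (hD : |x| + |y| ≤ (n:ℤ) - 1) :
    Mpot n (targ (x,y) ((uOdo n (x,y) : ℕ) : Fin 4)) < Mpot n (x,y) := by
  have hn' : (1:ℤ) ≤ n := by exact_mod_cast hn
  have hDxy : x + y ≤ (n:ℤ) - 1 := by rwa [abs_of_pos hx, abs_of_pos hy] at hD
  set l : ℤ := (n:ℤ) - x - y with hldef
  have hl1 : 1 ≤ l := by omega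
  have hz0 : ((x,y) : ℤ×ℤ) ≠ (0,0) := by
    simp only [ne_eq, Prod.mk.injEq, not_and]
    intro h; omega
  have hell : ell n (x,y) = l := ell_pp hx hy
  have hq : quadIdx (x,y) = 0 := quadIdx_pp (le_of_lt hx) hy
  have hax : ¬(((x,y):ℤ×ℤ).1 = 0 ∨ ((x,y):ℤ×ℤ).2 = 0) := by
    push_neg; exact ⟨ne_of_gt hx, ne_of_gt hy⟩
  have hP : (2:ℤ) ≤ l * (l+1) := by nlinarith
  have huA : uAux n (x,y) = (l * (l+1)).toNat := by
    unfold uAux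
    rw [if_neg hz0, if_pos hD, hell]
  have hC : ((x,y) ∈ Cset n) ↔ (l % 4 = 2 ∧ 2 ≤ y) ∨ l % 4 = 3 := by
    have := mem_Cset_Q0 (n := n) (z := (x,y)) hx hy hD
    rwa [hell] at this
  have hmod4 : l % 4 = 0 ∨ l % 4 = 1 ∨ l % 4 = 2 ∨ l % 4 = 3 := by omega
  rcases hmod4 with h0 | h1 | h2 | h3
  · -- residue 0 : rotor points up
    have hnC : (x,y) ∉ Cset n := by rw [hC]; rintro (⟨ha, _⟩ | ha) <;> omega
    have hPmod : (l * (l+1)) % 4 = 0 := by rw [Int.mul_emod, h0]; omega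
    have hu : uOdo n (x,y) % 4 = 0 := by
      unfold uOdo; rw [huA, if_neg hnC]; omega
    rw [fin4_cast hu (by norm_num)]
    have htarg : targ (x,y) ⟨0, by norm_num⟩ = ((x:ℤ), y+1) := by
      rw [targ_eval hz0 _ (by rintro ⟨hc, _⟩; exact absurd hc (by decide)), hq]
      norm_num [rot0, Prod.ext_iff]
    rw [htarg, Mpot_pp03 n hx (by omega : (0:ℤ) < y+1) (Or.inr (by omega)),
        Mpot_pp03 n hx hy (Or.inl (by omega))]
    linarith
  · -- residue 1 : rotor points down
    have hnC : (x,y) ∉ Cset n := by rw [hC]; rintro (⟨ha, _⟩ | ha) <;> omega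
    have hPmod : (l * (l+1)) % 4 = 2 := by rw [Int.mul_emod, h1]; omega
    have hu : uOdo n (x,y) % 4 = 2 := by
      unfold uOdo; rw [huA, if_neg hnC]; omega
    rw [fin4_cast hu (by norm_num)]
    have htarg : targ (x,y) ⟨2, by norm_num⟩ = ((x:ℤ), y-1) := by
      rw [targ_eval hz0 _ (by rintro ⟨_, hc⟩; exact hax hc), hq]
      rw [show ((⟨2, by norm_num⟩ : Fin 4) : ℕ) + 0 = 2 from rfl, rot2, addpt]
      norm_num
      ring
    rw [htarg]
    by_cases hy2 : 2 ≤ y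
    · rw [Mpot_pp12 n hx (by omega : (0:ℤ) < y-1) (by rintro (hr | hr) <;> omega),
          Mpot_pp12 n hx hy (by rintro (hr | hr) <;> omega)]
      have : (n:ℤ) * (y-1) = n * y - n := by ring
      linarith
    · have hy1 : y = 1 := by omega
      subst hy1
      rw [Mpot_axis n (Or.inr (by norm_num)), Mpot_pp12 n hx hy
        (by rintro (hr | hr) <;> omega)]
      simp only [abs_of_pos hx]
      norm_num
      linarith
  · -- residue 2
    have hPmod : (l * (l+1)) % 4 = 2 := by rw [Int.mul_emod, h2]; omega
    by_cases hy2 : 2 ≤ y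
    · -- in Cset : rotor points right
      have hCm : (x,y) ∈ Cset n := hC.mpr (Or.inl ⟨h2, hy2⟩)
      have hu : uOdo n (x,y) % 4 = 1 := by
        unfold uOdo; rw [huA, if_pos hCm]; omega
      rw [fin4_cast hu (by norm_num)]
      have htarg : targ (x,y) ⟨1, by norm_num⟩ = ((x+1:ℤ), y) := by
        rw [targ_eval hz0 _ (by rintro ⟨hc, _⟩; exact absurd hc (by decide)), hq]
        rw [show ((⟨1, by norm_num⟩ : Fin 4) : ℕ) + 0 = 1 from rfl, rot1, addpt]
        norm_num
      rw [htarg, Mpot_pp12 n (by omega : (0:ℤ) < x+1) hy (by rintro (hr | hr) <;> omega),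
          Mpot_pp12 n hx hy (by rintro (hr | hr) <;> omega)]
      linarith
    · -- y = 1, not in Cset : rotor points down to the axis
      have hy1 : y = 1 := by omega
      subst hy1
      have hnC : (x,1) ∉ Cset n := by
        rw [hC]; rintro (⟨ha, hb⟩ | ha) <;> omega
      have hu : uOdo n (x,1) % 4 = 2 := by
        unfold uOdo; rw [huA, if_neg hnC]; omega
      rw [fin4_cast hu (by norm_num)]
      have htarg : targ (x,1) ⟨2, by norm_num⟩ = ((x:ℤ), 0) := by
        rw [targ_eval hz0 _ (by rintro ⟨_, hc⟩; exact hax hc), hq]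
        rw [show ((⟨2, by norm_num⟩ : Fin 4) : ℕ) + 0 = 2 from rfl, rot2, addpt]
        norm_num
      rw [htarg, Mpot_axis n (Or.inr (by norm_num)),
          Mpot_pp12 n hx (by norm_num) (by rintro (hr | hr) <;> omega)]
      simp only [abs_of_pos hx]
      norm_num
      linarith
  · -- residue 3 : in Cset, rotor points left
    have hCm : (x,y) ∈ Cset n := hC.mpr (Or.inr h3)
    have hPmod : (l * (l+1)) % 4 = 0 := by rw [Int.mul_emod, h3]; omega
    have hu : uOdo n (x,y) % 4 = 3 := by
      unfold uOdo; rw [huA, if_pos hCm]; omega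
    rw [fin4_cast hu (by norm_num)]
    have htarg : targ (x,y) ⟨3, by norm_num⟩ = ((x-1:ℤ), y) := by
      rw [targ_eval hz0 _ (by rintro ⟨hc, _⟩; exact absurd hc (by decide)), hq]
      rw [show ((⟨3, by norm_num⟩ : Fin 4) : ℕ) + 0 = 3 from rfl, rot3, addpt]
      norm_num
      ring
    rw [htarg]
    by_cases hx2 : 2 ≤ x
    · rw [Mpot_pp03 n (by omega : (0:ℤ) < x-1) hy (Or.inl (by omega)),
          Mpot_pp03 n hx hy (Or.inr (by omega))]
      have : (n:ℤ) * (x-1) = n * x - n := by ring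
      linarith
    · have hx1 : x = 1 := by omega
      subst hx1
      rw [Mpot_axis n (Or.inl (by norm_num)),
          Mpot_pp03 n (by norm_num) hy (Or.inr (by omega))]
      simp only [abs_of_pos hy]
      norm_num
      linarith
lemma keyAxis (n : ℕ) (hn : 1 ≤ n) (x y : ℤ) (haxis : x = 0 ∨ y = 0)
    (hz0 : ((x,y) : ℤ×ℤ) ≠ (0,0)) (hD : |x| + |y| ≤ (n:ℤ) - 1) :
    Mpot n (targ (x,y) ((uOdo n (x,y) : ℕ) : Fin 4)) < Mpot n (x,y) := by
  have hn' : (1:ℤ) ≤ n := by exact_mod_cast hn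
  set l : ℤ := (n:ℤ) - |x| - |y| with hldef
  have hl1 : 1 ≤ l := by
    have h1 := abs_nonneg x; have h2 := abs_nonneg y; linarith
  have hell : ell n (x,y) = l := rfl
  have hnC : ((x,y) : ℤ×ℤ) ∉ Cset n := by
    intro hmem
    have := mem_Cset_ne hmem
    rcases haxis with h | h
    · exact this.1 h
    · exact this.2 h
  have hP : (2:ℤ) ≤ l * (l+1) := by nlinarith
  have huA : uAux n (x,y) = (l * (l+1)).toNat := by
    unfold uAux
    rw [if_neg hz0, if_pos hD, hell]
  have hm : (l*(l+1)) % 4 = 0 ∨ (l*(l+1)) % 4 = 2 := by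
    have h4 : l % 4 = 0 ∨ l % 4 = 1 ∨ l % 4 = 2 ∨ l % 4 = 3 := by omega
    rcases h4 with h | h | h | h <;> rw [Int.mul_emod, h] <;> omega
  have hu : uOdo n (x,y) % 4 = 0 ∨ uOdo n (x,y) % 4 = 2 := by
    unfold uOdo; rw [huA, if_neg hnC]; omega
  have htarg : targ (x,y) ((uOdo n (x,y) : ℕ) : Fin 4)
      = (x,y) + Rot^[quadIdx (x,y)] (0,1) := by
    rcases hu with hu | hu
    · rw [fin4_cast hu (by norm_num),
        targ_eval hz0 _ (by rintro ⟨hc, _⟩; exact absurd hc (by decide))]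
      rw [show ((⟨0, by norm_num⟩ : Fin 4) : ℕ) = 0 from rfl, Nat.zero_add]
    · rw [fin4_cast hu (by norm_num)]
      unfold targ
      rw [if_neg hz0, if_pos ⟨rfl, haxis⟩]
  rw [htarg]
  rcases haxis with h | h
  · subst h
    rcases lt_or_gt_of_ne (show y ≠ 0 by intro h; exact hz0 (by rw [h])) with hy | hy
    · -- negative y-axis
      have hq : quadIdx (0, y) = 2 := by
        unfold quadIdx
        rw [if_neg (by push_neg; intro _; exact le_of_lt hy), if_neg (by simp),
          if_pos ⟨le_refl _, hy⟩]
      rw [hq, rot2, addpt, Mpot_axis n (Or.inl (by norm_num)), Mpot_axis n (Or.inl rfl)]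
      simp only [abs_of_neg hy, abs_of_neg (show y + -1 < 0 by omega)]
      norm_num
    · -- positive y-axis
      have hq : quadIdx (0, y) = 0 := quadIdx_pp (le_refl _) hy
      rw [hq, rot0, addpt, Mpot_axis n (Or.inl (by norm_num)), Mpot_axis n (Or.inl rfl)]
      simp only [abs_of_pos hy, abs_of_pos (show (0:ℤ) < y + 1 by omega)]
      norm_num
  · subst h
    rcases lt_or_gt_of_ne (show x ≠ 0 by intro h; exact hz0 (by rw [h])) with hx | hx
    · -- negative x-axis
      have hq : quadIdx (x, 0) = 3 := by
        unfold quadIdx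
        rw [if_neg (by push_neg; intro _; simp), if_neg (by push_neg; intro h; simp at h; omega),
          if_neg (by push_neg; intro _; simp)]
      rw [hq, rot3, addpt, Mpot_axis n (Or.inr (by norm_num)), Mpot_axis n (Or.inr rfl)]
      simp only [abs_of_neg hx, abs_of_neg (show x + -1 < 0 by omega)]
      norm_num
    · -- positive x-axis
      have hq : quadIdx (x, 0) = 1 := by
        unfold quadIdx
        rw [if_neg (by push_neg; intro _; simp), if_pos ⟨hx, le_refl _⟩]
      rw [hq, rot1, addpt, Mpot_axis n (Or.inr (by norm_num)), Mpot_axis n (Or.inr rfl)]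
      simp only [abs_of_pos hx, abs_of_pos (show (0:ℤ) < x + 1 by omega)]
      norm_num
lemma keyO (n : ℕ) (hn : 1 ≤ n) :
    Mpot n (targ (0,0) ((uOdo n ((0:ℤ),(0:ℤ)) : ℕ) : Fin 4)) < Mpot n (0,0) := by
  have hnC : ((0,0) : ℤ×ℤ) ∉ Cset n := fun h => (mem_Cset_ne h).1 rfl
  have huA : uAux n (0,0) = 2*n*(n+1) := if_pos rfl
  have hu : uOdo n (0,0) % 4 = 0 := by
    unfold uOdo
    rw [huA, if_neg hnC]
    obtain ⟨m, hm⟩ := Nat.even_mul_succ_self n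
    have h2 : 2*n*(n+1) = 2*(n*(n+1)) := by ring
    omega
  rw [fin4_cast hu (by norm_num)]
  have htarg : targ ((0,0) : ℤ×ℤ) ⟨0, by norm_num⟩ = ((0:ℤ), (1:ℤ)) := by
    unfold targ
    rw [if_pos rfl]
    rfl
  rw [htarg, Mpot_axis n (Or.inl rfl), Mpot_axis n (Or.inl rfl)]
  norm_num

lemma key (n : ℕ) (hn : 1 ≤ n) (z : ℤ × ℤ) (hD : |z.1| + |z.2| ≤ (n:ℤ) - 1) :
    Mpot n (targ z ((uOdo n z : ℕ) : Fin 4)) < Mpot n z := by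
  obtain ⟨x, y⟩ := z
  by_cases hz : ((x,y) : ℤ×ℤ) = ((0:ℤ),(0:ℤ))
  · rw [hz]; exact keyO n hn
  by_cases haxis : x = 0 ∨ y = 0
  · exact keyAxis n hn x y haxis hz hD
  push_neg at haxis
  have hD' : |x| + |y| ≤ (n:ℤ) - 1 := hD
  rcases lt_or_gt_of_ne haxis.1 with hx | hx <;>
    rcases lt_or_gt_of_ne haxis.2 with hy | hy
  · -- x < 0, y < 0 : z = Rot (Rot (-x,-y))
    have hw0 : ((-x,-y) : ℤ×ℤ) ≠ (0,0) := by
      simp only [ne_eq, Prod.mk.injEq, not_and]; intro h; omega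
    have hw1 : Rot ((-x,-y) : ℤ×ℤ) ≠ (0,0) := rot_ne_zero hw0
    have hzw : ((x,y) : ℤ×ℤ) = Rot (Rot (-x, -y)) := by simp [Rot]
    rw [hzw, targ_rot hw1, targ_rot hw0]
    simp only [uOdo_rot, Mpot_rot]
    exact keyQ0 n hn (-x) (-y) (by omega) (by omega)
      (by rw [abs_neg, abs_neg]; exact hD')
  · -- x < 0, y > 0 : z = Rot (Rot (Rot (y,-x)))
    have hw0 : ((y,-x) : ℤ×ℤ) ≠ (0,0) := by
      simp only [ne_eq, Prod.mk.injEq, not_and]; intro h; omega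
    have hw1 : Rot ((y,-x) : ℤ×ℤ) ≠ (0,0) := rot_ne_zero hw0
    have hw2 : Rot (Rot ((y,-x) : ℤ×ℤ)) ≠ (0,0) := rot_ne_zero hw1
    have hzw : ((x,y) : ℤ×ℤ) = Rot (Rot (Rot (y, -x))) := by simp [Rot]
    rw [hzw, targ_rot hw2, targ_rot hw1, targ_rot hw0]
    simp only [uOdo_rot, Mpot_rot]
    exact keyQ0 n hn y (-x) hy (by omega)
      (by rw [abs_neg, add_comm]; exact hD')
  · -- x > 0, y < 0 : z = Rot (-y,x)
    have hw0 : ((-y,x) : ℤ×ℤ) ≠ (0,0) := by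
      simp only [ne_eq, Prod.mk.injEq, not_and]; intro h; omega
    have hzw : ((x,y) : ℤ×ℤ) = Rot (-y, x) := by simp [Rot]
    rw [hzw, targ_rot hw0]
    simp only [uOdo_rot, Mpot_rot]
    exact keyQ0 n hn (-y) x (by omega) hx
      (by rw [abs_neg, add_comm]; exact hD')
  · exact keyQ0 n hn x y hx hy hD'

/-- Fix `n ≥ 1` and work in the induced subgraph `D_n` of the layered square
lattice `Ẑ²` with the outer layer `L_n` as sinks (since `u_n` is supported on
`D_{n-1}`, whose out-edges stay in `D_n`, this is realized by firing in `Ẑ²`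
itself).  With `(ρ_n, σ_n) = F^{u_n}(ρ₀, (2n²+2n+1)δ_o)`, where `F^{u_n}` is
realized by firing along any list `L` containing each vertex `v` exactly
`u_n(v)` times, the rotor configuration `ρ_n` on `D_{n-1}` is acyclic: there is
no directed cycle `f 0, f 1, …, f k = f 0` (`k ≥ 1`) with every `f i ∈ D_{n-1}`
and each `f (i+1)` the head of the rotor edge of `ρ_n` at `f i`. -/
theorem rotor_config_acyclic (n : ℕ) (hn : 1 ≤ n)
    (L : List (ℤ × ℤ)) (hL : ∀ v, L.count v = uOdo n v)
    (ρn : RotorConfig) (σn : (ℤ × ℤ) → ℤ)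
    (h : fireLatList L (rho0, sigma0 n) = (ρn, σn)) :
    ∀ (k : ℕ) (f : ℕ → ℤ × ℤ), 0 < k →
      (∀ i < k, |(f i).1| + |(f i).2| ≤ (n : ℤ) - 1) →
      (∀ i < k, f (i + 1) = targ (f i) (ρn (f i))) →
      f k ≠ f 0 := by
  intro k f hk hmem hstep
  have hρ : ∀ z, ρn z = ((uOdo n z : ℕ) : Fin 4) := by
    intro z
    have h1 : (fireLatList L (rho0, sigma0 n)).1 = ρn := by rw [h]
    rw [← h1, fire_rho, hL]
    simp [rho0]
  have hdec : ∀ i, i < k → Mpot n (f (i+1)) < Mpot n (f i) := by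
    intro i hi
    rw [hstep i hi, hρ]
    exact key n hn (f i) (hmem i hi)
  have hchain : ∀ i, i ≤ k → Mpot n (f i) + i ≤ Mpot n (f 0) := by
    intro i hi
    induction i with
    | zero => simp
    | succ j ih =>
      have h1 := hdec j (by omega)
      have h2 := ih (by omega)
      push_cast
      push_cast at h2
      linarith
  intro hcon
  have hfin := hchain k (le_refl k)
  rw [hcon] at hfin
  have hk' : (1:ℤ) ≤ (k:ℤ) := by exact_mod_cast hk
  linarith
end
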